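/- Calibrated Jury Theorem: under the one-coin model with equal priors P(Y=+1) = P(Y=−1) = 1/2, conditionally independent votes X_k ∈ {−1,+1} with accuracies p_k ∈ (0,1)\{1/2}, the weighted-majority rule δ(x) = sign(Σ_k α_k x_k) with weights α_k = log(p_k/(1−p_k)) (arbitrary tie-breaking at zero) satisfies P(δ(X) ≠ Y) ≤ (1/2)·exp(−Σ_k C_k), where C_k = −(1/2)·log(1 − (2p_k − 1)²). -/

import Mathlib

/-- Class-conditional likelihood of the vote vector `x` given label `y` (`true = +1`). -/
noncomputable def voteLik {K : ℕ} (p : Fin K → ℝ) (y : Bool) (x : Fin K → Bool) : ℝ :=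
  ∏ k, if x k = y then p k else 1 - p k

/-- Real encoding of a ±1 vote. -/
def pm (b : Bool) : ℝ := if b then 1 else -1

private lemma sqrt_prod' {ι : Type*} (s : Finset ι) (f : ι → ℝ) (h : ∀ i, 0 ≤ f i) :
    Real.sqrt (∏ i ∈ s, f i) = ∏ i ∈ s, Real.sqrt (f i) := by
  classical
  induction s using Finset.induction with
  | empty => simp
  | insert _ _ hnot ih =>
      rw [Finset.prod_insert hnot, Finset.prod_insert hnot, Real.sqrt_mul (h _), ih]

theorem stmt4 (K : ℕ) (p : Fin K → ℝ) (hp : ∀ k, p k ∈ Set.Ioo (0:ℝ) 1)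
    (hp' : ∀ k, p k ≠ 1/2)
    (δ : (Fin K → Bool) → Bool)
    (hδpos : ∀ x, 0 < ∑ k, Real.log (p k / (1 - p k)) * pm (x k) → δ x = true)
    (hδneg : ∀ x, ∑ k, Real.log (p k / (1 - p k)) * pm (x k) < 0 → δ x = false) :
    (∑ y : Bool, ∑ x : Fin K → Bool,
        (1/2) * voteLik p y x * (if δ x = y then 0 else 1))
      ≤ (1/2) * Real.exp (-∑ k, -(1/2) * Real.log (1 - (2 * p k - 1)^2)) := by
  classical
  have hp0 : ∀ k, 0 < p k := fun k => (hp k).1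
  have hp1 : ∀ k, 0 < 1 - p k := fun k => by linarith [(hp k).2]
  -- likelihoods are positive
  have hLpos : ∀ (y : Bool) (x : Fin K → Bool), 0 < voteLik p y x := by
    intro y x
    exact Finset.prod_pos fun k _ => by
      by_cases h : x k = y <;> simp [h, hp0 k, hp1 k]
  -- the LLR sum equals log (L⁺/L⁻)
  have hsum : ∀ x : Fin K → Bool,
      (∑ k, Real.log (p k / (1 - p k)) * pm (x k))
        = Real.log (voteLik p true x) - Real.log (voteLik p false x) := by
    intro x
    unfold voteLik
    rw [Real.log_prod (fun k _ => by by_cases h : x k = true <;> simp [h, (hp0 k).ne', (hp1 k).ne']),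
        Real.log_prod (fun k _ => by by_cases h : x k = false <;> simp [h, (hp0 k).ne', (hp1 k).ne'])]
    rw [← Finset.sum_sub_distrib]
    refine Finset.sum_congr rfl fun k _ => ?_
    rcases Bool.eq_false_or_eq_true (x k) with h | h <;>
      simp [h, pm, Real.log_div (hp0 k).ne' (hp1 k).ne'] <;> ring
  -- √(L⁺ L⁻) is constant
  have hsqrt : ∀ x : Fin K → Bool,
      Real.sqrt (voteLik p true x * voteLik p false x)
        = ∏ k, Real.sqrt (p k * (1 - p k)) := by
    intro x
    have : voteLik p true x * voteLik p false x = ∏ k, p k * (1 - p k) := by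
      unfold voteLik
      rw [← Finset.prod_mul_distrib]
      refine Finset.prod_congr rfl fun k _ => ?_
      rcases Bool.eq_false_or_eq_true (x k) with h | h <;> simp [h] <;> ring
    rw [this, sqrt_prod' _ _ (fun k => le_of_lt (mul_pos (hp0 k) (hp1 k)))]
  -- RHS exponential equals the product of 2√(p(1-p))
  have hrhs : Real.exp (-∑ k, -(1/2) * Real.log (1 - (2 * p k - 1)^2))
      = ∏ k : Fin K, 2 * Real.sqrt (p k * (1 - p k)) := by
    rw [← Finset.sum_neg_distrib, Real.exp_sum]
    refine Finset.prod_congr rfl fun k _ => ?_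
    have h4 : 1 - (2 * p k - 1)^2 = 4 * (p k * (1 - p k)) := by ring
    have hpos : 0 < p k * (1 - p k) := mul_pos (hp0 k) (hp1 k)
    rw [h4]
    have h1 : Real.exp (-(-(1/2) * Real.log (4 * (p k * (1 - p k)))))
        = (4 * (p k * (1 - p k))) ^ ((1:ℝ)/2) := by
      rw [Real.rpow_def_of_pos (by positivity)]
      ring_nf
    rw [h1, ← Real.sqrt_eq_rpow, Real.sqrt_mul (by norm_num : (0:ℝ) ≤ 4)]
    have h2 : Real.sqrt 4 = 2 := by
      rw [show (4:ℝ) = 2^2 by norm_num]; exact Real.sqrt_sq (by norm_num)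
    rw [h2]
  -- main estimate
  rw [hrhs]
  -- swap order of summation and bound pointwise
  have hswap : (∑ y : Bool, ∑ x : Fin K → Bool,
        (1/2) * voteLik p y x * (if δ x = y then 0 else 1))
      = ∑ x : Fin K → Bool, ∑ y : Bool,
        (1/2) * voteLik p y x * (if δ x = y then 0 else 1) := Finset.sum_comm
  rw [hswap]
  have hbound : ∀ x : Fin K → Bool,
      (∑ y : Bool, (1/2) * voteLik p y x * (if δ x = y then 0 else 1))
        ≤ (1/2) * Real.sqrt (voteLik p true x * voteLik p false x) := by
    intro x
    have hmin : ∀ y : Bool, voteLik p y x ≤ voteLik p (!y) x →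
        voteLik p y x ≤ Real.sqrt (voteLik p true x * voteLik p false x) := by
      intro y hle
      have h1 : voteLik p y x * voteLik p y x ≤ voteLik p true x * voteLik p false x := by
        cases y
        · simp only [Bool.not_false] at hle
          nlinarith [hLpos false x, hLpos true x]
        · simp only [Bool.not_true] at hle
          nlinarith [hLpos false x, hLpos true x]
      calc voteLik p y x = Real.sqrt (voteLik p y x * voteLik p y x) := by
            rw [Real.sqrt_mul_self (hLpos y x).le]
        _ ≤ _ := Real.sqrt_le_sqrt h1
    rcases Bool.eq_false_or_eq_true (δ x) with hδ | hδ
    · -- δ x = true: error term is voteLik on false; here L⁻ ≤ L⁺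
      have hle : voteLik p false x ≤ voteLik p true x := by
        have h0 : ¬ (∑ k, Real.log (p k / (1 - p k)) * pm (x k) < 0) := fun h =>
          absurd (hδneg x h) (by simp [hδ])
        push_neg at h0
        rw [hsum x] at h0
        exact (Real.log_le_log_iff (hLpos false x) (hLpos true x)).mp (by linarith)
      have := hmin false (by simpa using hle)
      simp [hδ]
      linarith
    · -- δ x = false: error term is voteLik on true; here L⁺ ≤ L⁻
      have hle : voteLik p true x ≤ voteLik p false x := by
        have h0 : ¬ (0 < ∑ k, Real.log (p k / (1 - p k)) * pm (x k)) := fun h =>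
          absurd (hδpos x h) (by simp [hδ])
        push_neg at h0
        rw [hsum x] at h0
        exact (Real.log_le_log_iff (hLpos true x) (hLpos false x)).mp (by linarith)
      have := hmin true (by simpa using hle)
      simp [hδ]
      linarith
  calc (∑ x : Fin K → Bool, ∑ y : Bool,
        (1/2) * voteLik p y x * (if δ x = y then 0 else 1))
      ≤ ∑ x : Fin K → Bool, (1/2) * Real.sqrt (voteLik p true x * voteLik p false x) :=
        Finset.sum_le_sum fun x _ => hbound x
    _ = ∑ _x : Fin K → Bool, (1/2) * ∏ k, Real.sqrt (p k * (1 - p k)) := by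
        refine Finset.sum_congr rfl fun x _ => by rw [hsqrt x]
    _ = (2:ℝ)^K * ((1/2) * ∏ k, Real.sqrt (p k * (1 - p k))) := by
        rw [Finset.sum_const, Finset.card_univ, Fintype.card_fun]
        simp [nsmul_eq_mul]
    _ = (1/2) * ∏ k : Fin K, 2 * Real.sqrt (p k * (1 - p k)) := by
        rw [Finset.prod_mul_distrib, Finset.prod_const, Finset.card_univ, Fintype.card_fin]
        ring
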